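/- Under the factor-model setup, the squared correlation between the model prediction and the target return satisfies Cov(ŷ, rΔ)² / (Var(ŷ) · Var(rΔ)) = α_δ² · α_Δ² / ((α_δ² + d·v) · (α_Δ² + σΔ²)). (This is the exact form of the paper's generalization-performance formula J(δ) = α(δ)²α(Δ)² / ([α(δ)² + K(δ+δ0)]·V_target), with K(δ+δ0) = d·v and σΔ² = σ²(Δ+δ0).) -/

import Mathlib

open MeasureTheory ProbabilityTheory

private lemma indep_integral_mul'' {Ω : Type*} [MeasurableSpace Ω] {μ : Measure Ω}
    {X Y : Ω → ℝ} (h : IndepFun X Y μ) (hX : AEStronglyMeasurable X μ)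
    (hY : AEStronglyMeasurable Y μ) :
    ∫ ω, X ω * Y ω ∂μ = (∫ ω, X ω ∂μ) * ∫ ω, Y ω ∂μ :=
  h.integral_fun_mul_eq_mul_integral hX hY

private lemma memL2_integrable_mul {Ω : Type*} [MeasurableSpace Ω] {μ : Measure Ω}
    {f g : Ω → ℝ} (hf : MemLp f 2 μ) (hg : MemLp g 2 μ) :
    Integrable (fun ω => f ω * g ω) μ := by
  have h : MemLp (f • g) 1 μ := hg.smul hf
  exact memLp_one_iff_integrable.mp h

/-- Under the factor-model setup, with prediction
`ŷ = Σ_i (α_δ·w_i + z_i)·s_i` and target return `rΔ = α_Δ·(Σ_i w_i·s_i) + εΔ`,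
the squared correlation satisfies
`Cov(ŷ, rΔ)² / (Var(ŷ)·Var(rΔ)) = α_δ²·α_Δ² / ((α_δ² + d·v)·(α_Δ² + σΔ²))`. -/
theorem squared_correlation_formula
    {Ω : Type*} [MeasurableSpace Ω] (μ : Measure Ω) [IsProbabilityMeasure μ]
    {d : ℕ} (hd : 1 ≤ d)
    (w : Fin d → ℝ) (hw : ∑ i, w i ^ 2 = 1)
    (αδ αΔ v σΔsq : ℝ) (hαδ : 0 < αδ) (hαΔ : 0 < αΔ) (hv : 0 < v) (hσ : 0 < σΔsq)
    (s z : Ω → Fin d → ℝ) (ε : Ω → ℝ)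
    (hs_meas : Measurable s) (hz_meas : Measurable z) (hε_meas : Measurable ε)
    (hs2 : ∀ i, MemLp (fun ω => s ω i) 2 μ)
    (hz2 : ∀ i, MemLp (fun ω => z ω i) 2 μ)
    (hε2 : MemLp ε 2 μ)
    (hs0 : ∀ i, ∫ ω, s ω i ∂μ = 0)
    (hscov : ∀ i j, ∫ ω, s ω i * s ω j ∂μ = if i = j then 1 else 0)
    (hz0 : ∀ i, ∫ ω, z ω i ∂μ = 0)
    (hzcov : ∀ i j, ∫ ω, z ω i * z ω j ∂μ = if i = j then v else 0)
    (hε0 : ∫ ω, ε ω ∂μ = 0)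
    (hεvar : ∫ ω, ε ω ^ 2 ∂μ = σΔsq)
    (hindep_sz : IndepFun s z μ)
    (hindep_ε : IndepFun (fun ω => (s ω, z ω)) ε μ) :
    (∫ ω, (∑ i, (αδ * w i + z ω i) * s ω i) * (αΔ * (∑ i, w i * s ω i) + ε ω) ∂μ) ^ 2
        / ((∫ ω, (∑ i, (αδ * w i + z ω i) * s ω i) ^ 2 ∂μ)
           * (∫ ω, (αΔ * (∑ i, w i * s ω i) + ε ω) ^ 2 ∂μ))
      = αδ ^ 2 * αΔ ^ 2 / ((αδ ^ 2 + d * v) * (αΔ ^ 2 + σΔsq)) := by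
  classical
  have h12 : (1 : ENNReal) ≤ 2 := one_le_two
  have hsi : ∀ i, Integrable (fun ω => s ω i) μ := fun i => (hs2 i).integrable h12
  have hzi : ∀ i, Integrable (fun ω => z ω i) μ := fun i => (hz2 i).integrable h12
  have hεi : Integrable ε μ := hε2.integrable h12
  have hss : ∀ i j, Integrable (fun ω => s ω i * s ω j) μ :=
    fun i j => memL2_integrable_mul (hs2 i) (hs2 j)
  have hA2 : ∀ i, MemLp (fun ω => αδ * w i + z ω i) 2 μ :=
    fun i => (memLp_const (αδ * w i)).add (hz2 i)
  have hAi : ∀ i, Integrable (fun ω => αδ * w i + z ω i) μ :=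
    fun i => (hA2 i).integrable h12
  have hA0 : ∀ i, ∫ ω, (αδ * w i + z ω i) ∂μ = αδ * w i := by
    intro i
    rw [integral_add (integrable_const _) (hzi i), integral_const, hz0 i]
    simp
  -- independence of a function of z and a function of s
  have hIzs : ∀ (f g : (Fin d → ℝ) → ℝ), Measurable f → Measurable g →
      IndepFun (fun ω => f (z ω)) (fun ω => g (s ω)) μ :=
    fun f g hf hg => (hindep_sz.comp hg hf).symm
  -- independence of a function of (s, z) and ε
  have hIε : ∀ (f : (Fin d → ℝ) × (Fin d → ℝ) → ℝ), Measurable f →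
      IndepFun (fun ω => f (s ω, z ω)) ε μ :=
    fun f hf => hindep_ε.comp hf measurable_id
  -- the integrand a_i := (αδ w_i + z_i) s_i
  have hai : ∀ i, Integrable (fun ω => (αδ * w i + z ω i) * s ω i) μ :=
    fun i => memL2_integrable_mul (hA2 i) (hs2 i)
  -- key products
  have hints1 : ∀ i j, Integrable (fun ω => (αδ * w i + z ω i) * (s ω i * s ω j)) μ := by
    intro i j
    exact (hIzs (fun x => αδ * w i + x i) (fun x => x i * x j)
      (measurable_const.add (measurable_pi_apply i))
      ((measurable_pi_apply i).mul (measurable_pi_apply j))).integrable_mul (hAi i) (hss i j)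
  have hval1 : ∀ i j, ∫ ω, (αδ * w i + z ω i) * (s ω i * s ω j) ∂μ
      = αδ * w i * (if i = j then 1 else 0) := by
    intro i j
    rw [indep_integral_mul''
      (hIzs (fun x => αδ * w i + x i) (fun x => x i * x j)
        (measurable_const.add (measurable_pi_apply i))
        ((measurable_pi_apply i).mul (measurable_pi_apply j)))
      (hAi i).1 (hss i j).1, hA0 i, hscov i j]
  have hint_aε : ∀ i, Integrable (fun ω => ((αδ * w i + z ω i) * s ω i) * ε ω) μ := by
    intro i
    exact (hIε (fun p => (αδ * w i + p.2 i) * p.1 i)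
      (((measurable_const.add ((measurable_pi_apply i).comp measurable_snd))).mul
        ((measurable_pi_apply i).comp measurable_fst))).integrable_mul (hai i) hεi
  have hval_aε : ∀ i, ∫ ω, ((αδ * w i + z ω i) * s ω i) * ε ω ∂μ = 0 := by
    intro i
    rw [indep_integral_mul''
      (hIε (fun p => (αδ * w i + p.2 i) * p.1 i)
        (((measurable_const.add ((measurable_pi_apply i).comp measurable_snd))).mul
          ((measurable_pi_apply i).comp measurable_fst)))
      (hai i).1 hεi.1, hε0, mul_zero]
  have hint_sε : ∀ i, Integrable (fun ω => s ω i * ε ω) μ := by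
    intro i
    exact (hIε (fun p => p.1 i)
      ((measurable_pi_apply i).comp measurable_fst)).integrable_mul (hsi i) hεi
  have hval_sε : ∀ i, ∫ ω, s ω i * ε ω ∂μ = 0 := by
    intro i
    rw [indep_integral_mul''
      (hIε (fun p => p.1 i) ((measurable_pi_apply i).comp measurable_fst))
      (hsi i).1 hεi.1, hε0, mul_zero]
  have hintAA : ∀ i j, Integrable (fun ω => (αδ * w i + z ω i) * (αδ * w j + z ω j)) μ :=
    fun i j => memL2_integrable_mul (hA2 i) (hA2 j)
  have hAA : ∀ i j, ∫ ω, (αδ * w i + z ω i) * (αδ * w j + z ω j) ∂μ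
      = αδ ^ 2 * w i * w j + (if i = j then v else 0) := by
    intro i j
    have e : (fun ω => (αδ * w i + z ω i) * (αδ * w j + z ω j))
        = fun ω => ((αδ * w i * (αδ * w j) + (αδ * w i) * z ω j)
            + ((αδ * w j) * z ω i + z ω i * z ω j)) := by
      funext ω; ring
    have i1 : Integrable (fun ω => αδ * w i * (αδ * w j) + (αδ * w i) * z ω j) μ :=
      (integrable_const _).add ((hzi j).const_mul _)
    have i2 : Integrable (fun ω => (αδ * w j) * z ω i + z ω i * z ω j) μ :=
      ((hzi i).const_mul _).add (memL2_integrable_mul (hz2 i) (hz2 j))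
    rw [e, integral_add i1 i2, integral_add (integrable_const _) ((hzi j).const_mul _),
      integral_add ((hzi i).const_mul _) (memL2_integrable_mul (hz2 i) (hz2 j)),
      integral_const, integral_const_mul, integral_const_mul, hz0 i, hz0 j, hzcov i j]
    simp; ring
  have hints2 : ∀ i j, Integrable
      (fun ω => ((αδ * w i + z ω i) * (αδ * w j + z ω j)) * (s ω i * s ω j)) μ := by
    intro i j
    exact (hIzs (fun x => (αδ * w i + x i) * (αδ * w j + x j)) (fun x => x i * x j)
      ((measurable_const.add (measurable_pi_apply i)).mul
        (measurable_const.add (measurable_pi_apply j)))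
      ((measurable_pi_apply i).mul (measurable_pi_apply j))).integrable_mul
      (hintAA i j) (hss i j)
  have hval2 : ∀ i j, ∫ ω, ((αδ * w i + z ω i) * (αδ * w j + z ω j)) * (s ω i * s ω j) ∂μ
      = (αδ ^ 2 * w i * w j + (if i = j then v else 0)) * (if i = j then 1 else 0) := by
    intro i j
    rw [indep_integral_mul''
      (hIzs (fun x => (αδ * w i + x i) * (αδ * w j + x j)) (fun x => x i * x j)
        ((measurable_const.add (measurable_pi_apply i)).mul
          (measurable_const.add (measurable_pi_apply j)))
        ((measurable_pi_apply i).mul (measurable_pi_apply j)))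
      (hintAA i j).1 (hss i j).1, hAA i j, hscov i j]
  -- Covariance
  have hCov : ∫ ω, (∑ i, (αδ * w i + z ω i) * s ω i) * (αΔ * (∑ i, w i * s ω i) + ε ω) ∂μ
      = αδ * αΔ := by
    have e : ∀ ω, (∑ i, (αδ * w i + z ω i) * s ω i) * (αΔ * (∑ i, w i * s ω i) + ε ω)
        = ∑ i, ((∑ j, (αΔ * w j) * ((αδ * w i + z ω i) * (s ω i * s ω j)))
            + ((αδ * w i + z ω i) * s ω i) * ε ω) := by
      intro ω
      rw [Finset.sum_mul]
      refine Finset.sum_congr rfl fun i _ => ?_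
      rw [mul_add]
      congr 1
      simp only [Finset.mul_sum]
      exact Finset.sum_congr rfl fun j _ => by ring
    have hInt : ∀ i, Integrable (fun ω =>
        (∑ j, (αΔ * w j) * ((αδ * w i + z ω i) * (s ω i * s ω j)))
          + ((αδ * w i + z ω i) * s ω i) * ε ω) μ :=
      fun i => (integrable_finset_sum _ fun j _ => (hints1 i j).const_mul _).add (hint_aε i)
    calc ∫ ω, (∑ i, (αδ * w i + z ω i) * s ω i) * (αΔ * (∑ i, w i * s ω i) + ε ω) ∂μ
        = ∫ ω, ∑ i, ((∑ j, (αΔ * w j) * ((αδ * w i + z ω i) * (s ω i * s ω j)))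
            + ((αδ * w i + z ω i) * s ω i) * ε ω) ∂μ :=
          integral_congr_ae (Filter.Eventually.of_forall e)
      _ = ∑ i, ∫ ω, ((∑ j, (αΔ * w j) * ((αδ * w i + z ω i) * (s ω i * s ω j)))
            + ((αδ * w i + z ω i) * s ω i) * ε ω) ∂μ :=
          integral_finset_sum _ fun i _ => hInt i
      _ = ∑ i, (∑ j, (αΔ * w j) * (αδ * w i * (if i = j then 1 else 0))) := by
          refine Finset.sum_congr rfl fun i _ => ?_
          rw [integral_add (integrable_finset_sum _ fun j _ => (hints1 i j).const_mul _)
            (hint_aε i), hval_aε i, add_zero,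
            integral_finset_sum _ fun j _ => (hints1 i j).const_mul _]
          exact Finset.sum_congr rfl fun j _ => by rw [integral_const_mul, hval1 i j]
      _ = ∑ i, (αΔ * w i) * (αδ * w i) := by
          refine Finset.sum_congr rfl fun i _ => ?_
          simp [mul_ite, mul_one, mul_zero, Finset.sum_ite_eq]
      _ = αδ * αΔ := by
          have : ∀ i : Fin d, (αΔ * w i) * (αδ * w i) = (αδ * αΔ) * w i ^ 2 :=
            fun i => by ring
          rw [Finset.sum_congr rfl fun i _ => this i, ← Finset.mul_sum, hw, mul_one]
  -- Variance of ŷ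
  have hVarY : ∫ ω, (∑ i, (αδ * w i + z ω i) * s ω i) ^ 2 ∂μ = αδ ^ 2 + d * v := by
    have e : ∀ ω, (∑ i, (αδ * w i + z ω i) * s ω i) ^ 2
        = ∑ i, ∑ j, ((αδ * w i + z ω i) * (αδ * w j + z ω j)) * (s ω i * s ω j) := by
      intro ω
      rw [sq, Finset.sum_mul_sum]
      exact Finset.sum_congr rfl fun i _ => Finset.sum_congr rfl fun j _ => by ring
    calc ∫ ω, (∑ i, (αδ * w i + z ω i) * s ω i) ^ 2 ∂μ
        = ∫ ω, ∑ i, ∑ j, ((αδ * w i + z ω i) * (αδ * w j + z ω j)) * (s ω i * s ω j) ∂μ :=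
          integral_congr_ae (Filter.Eventually.of_forall e)
      _ = ∑ i, ∑ j, ∫ ω, ((αδ * w i + z ω i) * (αδ * w j + z ω j)) * (s ω i * s ω j) ∂μ := by
          rw [integral_finset_sum _ fun i _ => integrable_finset_sum _ fun j _ => hints2 i j]
          exact Finset.sum_congr rfl fun i _ => integral_finset_sum _ fun j _ => hints2 i j
      _ = ∑ i, (αδ ^ 2 * w i * w i + v) := by
          refine Finset.sum_congr rfl fun i _ => ?_
          simp only [hval2]
          simp [mul_ite, mul_one, mul_zero, Finset.sum_ite_eq]
      _ = αδ ^ 2 + d * v := by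
          rw [Finset.sum_add_distrib, Finset.sum_const, Finset.card_fin, nsmul_eq_mul]
          congr 1
          have : ∀ i : Fin d, αδ ^ 2 * w i * w i = αδ ^ 2 * w i ^ 2 := fun i => by ring
          rw [Finset.sum_congr rfl fun i _ => this i, ← Finset.mul_sum, hw, mul_one]
  -- Variance of rΔ
  have hVarR : ∫ ω, (αΔ * (∑ i, w i * s ω i) + ε ω) ^ 2 ∂μ = αΔ ^ 2 + σΔsq := by
    have e : ∀ ω, (αΔ * (∑ i, w i * s ω i) + ε ω) ^ 2
        = (∑ i, ∑ j, (αΔ ^ 2 * (w i * w j)) * (s ω i * s ω j))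
          + ((∑ i, ((2 * αΔ) * w i) * (s ω i * ε ω)) + ε ω ^ 2) := by
      intro ω
      have h1 : (∑ i, w i * s ω i) ^ 2 = ∑ i, ∑ j, (w i * w j) * (s ω i * s ω j) := by
        rw [sq, Finset.sum_mul_sum]
        exact Finset.sum_congr rfl fun i _ => Finset.sum_congr rfl fun j _ => by ring
      have h2 : (∑ i, w i * s ω i) * ε ω = ∑ i, w i * (s ω i * ε ω) := by
        rw [Finset.sum_mul]
        exact Finset.sum_congr rfl fun i _ => by ring
      rw [show (αΔ * (∑ i, w i * s ω i) + ε ω) ^ 2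
          = αΔ ^ 2 * (∑ i, w i * s ω i) ^ 2
            + ((2 * αΔ) * ((∑ i, w i * s ω i) * ε ω) + ε ω ^ 2) from by ring, h1, h2]
      congr 1
      · rw [Finset.mul_sum]
        refine Finset.sum_congr rfl fun i _ => ?_
        rw [Finset.mul_sum]
        exact Finset.sum_congr rfl fun j _ => by ring
      · congr 1
        rw [Finset.mul_sum]
        exact Finset.sum_congr rfl fun i _ => by ring
    have hIntSum : Integrable (fun ω => ∑ i, ∑ j, (αΔ ^ 2 * (w i * w j)) * (s ω i * s ω j)) μ :=
      integrable_finset_sum _ fun i _ => integrable_finset_sum _ fun j _ => (hss i j).const_mul _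
    have hIntSε : Integrable (fun ω => ∑ i, ((2 * αΔ) * w i) * (s ω i * ε ω)) μ :=
      integrable_finset_sum _ fun i _ => (hint_sε i).const_mul _
    have hIntε2 : Integrable (fun ω => ε ω ^ 2) μ := hε2.integrable_sq
    calc ∫ ω, (αΔ * (∑ i, w i * s ω i) + ε ω) ^ 2 ∂μ
        = ∫ ω, ((∑ i, ∑ j, (αΔ ^ 2 * (w i * w j)) * (s ω i * s ω j))
            + ((∑ i, ((2 * αΔ) * w i) * (s ω i * ε ω)) + ε ω ^ 2)) ∂μ :=
          integral_congr_ae (Filter.Eventually.of_forall e)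
      _ = (∑ i, ∑ j, (αΔ ^ 2 * (w i * w j)) * ∫ ω, s ω i * s ω j ∂μ)
            + ((∑ i, ((2 * αΔ) * w i) * ∫ ω, s ω i * ε ω ∂μ) + ∫ ω, ε ω ^ 2 ∂μ) := by
          have hIntRest : Integrable (fun ω =>
              (∑ i, ((2 * αΔ) * w i) * (s ω i * ε ω)) + ε ω ^ 2) μ := hIntSε.add hIntε2
          rw [integral_add hIntSum hIntRest, integral_add hIntSε hIntε2,
            integral_finset_sum _ fun i _ => integrable_finset_sum _ fun j _ =>
              (hss i j).const_mul _,
            integral_finset_sum _ fun i _ => (hint_sε i).const_mul _]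
          congr 1
          · refine Finset.sum_congr rfl fun i _ => ?_
            rw [integral_finset_sum _ fun j _ => (hss i j).const_mul _]
            exact Finset.sum_congr rfl fun j _ => integral_const_mul _ _
          · congr 1
            exact Finset.sum_congr rfl fun i _ => integral_const_mul _ _
      _ = αΔ ^ 2 + σΔsq := by
          simp only [hscov, hval_sε, hεvar, mul_zero, Finset.sum_const_zero, zero_add]
          congr 1
          have : ∀ i : Fin d, ∑ j, (αΔ ^ 2 * (w i * w j)) * (if i = j then 1 else 0)
              = αΔ ^ 2 * w i ^ 2 := by
            intro i
            simp only [mul_ite, mul_one, mul_zero, Finset.sum_ite_eq, Finset.mem_univ,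
              if_true]
            ring
          rw [Finset.sum_congr rfl fun i _ => this i, ← Finset.mul_sum, hw, mul_one]
  rw [hCov, hVarY, hVarR, mul_pow]
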